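/- Holenstein disagreement bound (statement): for probability mass functions p and q on a finite set with total variation distance δ, the Holenstein correlated-sampling strategy (both parties use shared randomness consisting of a uniformly random infinite sequence of pairs (u_i, t_i) with u_i uniform on the support set and t_i uniform on [0,1], and each party outputs the first u_i in the sequence with t_i < p(u_i) resp. t_i < q(u_i)) produces outputs X, Y satisfying P(X ≠ Y) ≤ 2δ/(1 + δ). -/

import Mathlib

open MeasureTheory

/-- The output of the Holenstein rejection-sampling strategy for pmf `p` on the
shared random sequence `ω` of pairs `(u_i, t_i)`: the first `u_i` with
`t_i < p u_i`. (If no index accepts, the value at index `sInf ∅ = 0` is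
returned; this happens with probability zero.) -/
noncomputable def holOut {U : Type*} (p : U → ℝ) (ω : ℕ → U × ℝ) : U :=
  (ω (sInf {i | (ω i).2 < p (ω i).1})).1

section Aux

variable {U : Type*} [Fintype U] [MeasurableSpace U] [MeasurableSingletonClass U]

/-- one-step measure -/
noncomputable def holNu (U : Type*) [Fintype U] [MeasurableSpace U] : Measure (U × ℝ) :=
  (((Fintype.card U : ENNReal)⁻¹ • Measure.count).prod
    (volume.restrict (Set.Icc (0:ℝ) 1)))

lemma holMeas (f : U → Set ℝ) (hf : ∀ u, MeasurableSet (f u)) :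
    MeasurableSet {x : U × ℝ | x.2 ∈ f x.1} := by
  have : {x : U × ℝ | x.2 ∈ f x.1} = ⋃ u, {u} ×ˢ f u := by
    ext ⟨u, t⟩; simp [eq_comm]
  rw [this]
  exact MeasurableSet.iUnion fun u => (measurableSet_singleton u).prod (hf u)

lemma holNu_apply (f : U → Set ℝ) (hf : ∀ u, MeasurableSet (f u)) :
    holNu U {x : U × ℝ | x.2 ∈ f x.1}
      = (Fintype.card U : ENNReal)⁻¹ * ∑ u, (volume.restrict (Set.Icc (0:ℝ) 1)) (f u) := by
  rw [holNu, Measure.prod_apply (holMeas f hf)]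
  have : ∀ u : U, (Prod.mk u ⁻¹' {x : U × ℝ | x.2 ∈ f x.1}) = f u := fun u => rfl
  simp_rw [this]
  rw [lintegral_smul_measure, lintegral_count, tsum_fintype, smul_eq_mul]

lemma vol01_Ico {a b : ℝ} (h0 : 0 ≤ a) (hab : a ≤ b) (h1 : b ≤ 1) :
    (volume.restrict (Set.Icc (0:ℝ) 1)) (Set.Ico a b) = ENNReal.ofReal (b - a) := by
  rw [Measure.restrict_apply measurableSet_Ico]
  have : Set.Ico a b ∩ Set.Icc (0:ℝ) 1 = Set.Ico a b := by
    apply Set.inter_eq_self_of_subset_left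
    intro t ht
    exact ⟨le_trans h0 ht.1, le_of_lt (lt_of_lt_of_le ht.2 h1)⟩
  rw [this, Real.volume_Ico]

lemma vol01_Iio {a : ℝ} (h0 : 0 ≤ a) (h1 : a ≤ 1) :
    (volume.restrict (Set.Icc (0:ℝ) 1)) (Set.Iio a) = ENNReal.ofReal a := by
  rw [Measure.restrict_apply measurableSet_Iio]
  have : Set.Iio a ∩ Set.Icc (0:ℝ) 1 = Set.Ico 0 a := by
    ext t
    constructor
    · rintro ⟨ht, h0t, _⟩; exact ⟨h0t, ht⟩
    · rintro ⟨h0t, ht⟩; exact ⟨ht, h0t, le_of_lt (lt_of_lt_of_le ht h1)⟩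
  rw [this, Real.volume_Ico, sub_zero]

end Aux

theorem stmt17 {U : Type*} [Fintype U] [MeasurableSpace U]
    [MeasurableSingletonClass U]
    (p q : U → ℝ)
    (hp : ∀ u, 0 ≤ p u) (hps : ∑ u, p u = 1)
    (hq : ∀ u, 0 ≤ q u) (hqs : ∑ u, q u = 1)
    (δ : ℝ) (hδ : δ = (1 / 2) * ∑ u, |p u - q u|)
    (μ : Measure (ℕ → U × ℝ)) [IsProbabilityMeasure μ]
    -- each coordinate pair `(u_i, t_i)` has `u_i` uniform on `U` and `t_i`
    -- uniform on `[0,1]`, independently of each other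
    (hlaw : ∀ i : ℕ, μ.map (fun ω => ω i) =
      ((Fintype.card U : ENNReal)⁻¹ • Measure.count).prod
        (volume.restrict (Set.Icc (0 : ℝ) 1)))
    -- the coordinates are i.i.d.
    (hindep : ProbabilityTheory.iIndepFun
      (fun i ω => ω i) μ) :
    μ {ω | holOut p ω ≠ holOut q ω} ≤ ENNReal.ofReal (2 * δ / (1 + δ)) := by
  classical
  -- basic facts
  have hne : Nonempty U := by
    by_contra h
    rw [not_nonempty_iff] at h
    simp [Finset.univ_eq_empty] at hps
  have hcard : (0:ℕ) < Fintype.card U := Fintype.card_pos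
  have hp1 : ∀ u, p u ≤ 1 := by
    intro u
    rw [← hps]
    exact Finset.single_le_sum (fun v _ => hp v) (Finset.mem_univ u)
  have hq1 : ∀ u, q u ≤ 1 := by
    intro u
    rw [← hqs]
    exact Finset.single_le_sum (fun v _ => hq v) (Finset.mem_univ u)
  have hδ0 : 0 ≤ δ := by
    rw [hδ]
    positivity
  have h1δ : (0:ℝ) < 1 + δ := by linarith
  -- key sets on U × ℝ
  set Bp : Set (U × ℝ) := {x | x.2 < p x.1} with hBp
  set Bq : Set (U × ℝ) := {x | x.2 < q x.1} with hBq
  have hBpS : Bp = {x : U × ℝ | x.2 ∈ Set.Iio (p x.1)} := rfl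
  have hBqS : Bq = {x : U × ℝ | x.2 ∈ Set.Iio (q x.1)} := rfl
  have hBpm : MeasurableSet Bp := hBpS ▸ holMeas _ (fun u => measurableSet_Iio)
  have hBqm : MeasurableSet Bq := hBqS ▸ holMeas _ (fun u => measurableSet_Iio)
  set Cs : Set (U × ℝ) := (Bp ∪ Bq)ᶜ with hCs
  set Ds : Set (U × ℝ) := (Bp \ Bq) ∪ (Bq \ Bp) with hDs
  have hCm : MeasurableSet Cs := (hBpm.union hBqm).compl
  have hDm : MeasurableSet Ds := (hBpm.diff hBqm).union (hBqm.diff hBpm)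
  set ν : Measure (U × ℝ) := holNu U with hν
  -- measure computations
  have hsum_max : ∑ u, max (p u) (q u) = 1 + δ := by
    have : ∀ u, max (p u) (q u) = (p u + q u + |p u - q u|) / 2 := by
      intro u
      rcases le_total (p u) (q u) with h | h
      · rw [max_eq_right h, abs_of_nonpos (by linarith)]; ring
      · rw [max_eq_left h, abs_of_nonneg (by linarith)]; ring
    simp_rw [this]
    rw [← Finset.sum_div, Finset.sum_add_distrib, Finset.sum_add_distrib, hps, hqs, hδ]
    ring
  have hνU : ν (Bp ∪ Bq) = (Fintype.card U : ENNReal)⁻¹ * ENNReal.ofReal (1 + δ) := by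
    have hset : Bp ∪ Bq = {x : U × ℝ | x.2 ∈ Set.Iio (max (p x.1) (q x.1))} := by
      ext x
      simp [hBp, hBq, lt_max_iff]
    rw [hset, hν]
    refine (holNu_apply (fun u => Set.Iio (max (p u) (q u)))
      (fun u => measurableSet_Iio)).trans ?_
    congr 1
    have : ∀ u : U, (volume.restrict (Set.Icc (0:ℝ) 1)) (Set.Iio (max (p u) (q u)))
        = ENNReal.ofReal (max (p u) (q u)) := by
      intro u
      exact vol01_Iio (le_trans (hp u) (le_max_left _ _)) (max_le (hp1 u) (hq1 u))
    simp_rw [this]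
    rw [← ENNReal.ofReal_sum_of_nonneg (fun u _ => le_trans (hp u) (le_max_left _ _)), hsum_max]
  have hνD : ν Ds = (Fintype.card U : ENNReal)⁻¹ * ENNReal.ofReal (2 * δ) := by
    have hset : Ds = {x : U × ℝ | x.2 ∈ Set.Ico (min (p x.1) (q x.1)) (max (p x.1) (q x.1))} := by
      ext x
      simp only [hDs, hBp, hBq, Set.mem_union, Set.mem_diff, Set.mem_setOf_eq, Set.mem_Ico]
      constructor
      · rintro (⟨h1, h2⟩ | ⟨h1, h2⟩)
        · exact ⟨le_trans (min_le_right _ _) (not_lt.1 h2), lt_max_iff.2 (Or.inl h1)⟩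
        · exact ⟨le_trans (min_le_left _ _) (not_lt.1 h2), lt_max_iff.2 (Or.inr h1)⟩
      · rintro ⟨hm, hM⟩
        rcases lt_max_iff.1 hM with h | h
        · exact Or.inl ⟨h, fun hc => absurd hm (not_le.2 (lt_min h hc))⟩
        · exact Or.inr ⟨h, fun hc => absurd hm (not_le.2 (lt_min hc h))⟩
    rw [hset, hν]
    refine (holNu_apply (fun u => Set.Ico (min (p u) (q u)) (max (p u) (q u)))
      (fun u => measurableSet_Ico)).trans ?_
    congr 1
    have : ∀ u : U, (volume.restrict (Set.Icc (0:ℝ) 1))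
        (Set.Ico (min (p u) (q u)) (max (p u) (q u))) = ENNReal.ofReal (|p u - q u|) := by
      intro u
      rw [vol01_Ico (le_min (hp u) (hq u)) (min_le_max) (max_le (hp1 u) (hq1 u)),
        max_sub_min_eq_abs, abs_sub_comm]
    simp_rw [this]
    rw [← ENNReal.ofReal_sum_of_nonneg (fun u _ => abs_nonneg _)]
    congr 1
    rw [hδ]; ring
  have hνuniv : ν Set.univ = 1 := by
    have hset : (Set.univ : Set (U × ℝ)) = {x : U × ℝ | x.2 ∈ (Set.univ : Set ℝ)} := by
      ext x; simp
    rw [hset, hν]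
    refine (holNu_apply (fun _ : U => (Set.univ : Set ℝ))
      (fun u => MeasurableSet.univ)).trans ?_
    simp only [Measure.restrict_apply MeasurableSet.univ, Set.univ_inter, Real.volume_Icc,
      sub_zero, ENNReal.ofReal_one, Finset.sum_const, Finset.card_univ, nsmul_eq_mul, mul_one]
    rw [ENNReal.inv_mul_cancel]
    · exact Nat.cast_ne_zero.mpr hcard.ne'
    · exact ENNReal.natCast_ne_top _
  have hνprob : IsProbabilityMeasure ν := ⟨hνuniv⟩
  have hνU_le : ν (Bp ∪ Bq) ≤ 1 := by
    rw [← hνuniv]; exact measure_mono (Set.subset_univ _)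
  have hνC : ν Cs = 1 - ν (Bp ∪ Bq) := by
    rw [hCs, measure_compl (hBpm.union hBqm) (ne_top_of_le_ne_top ENNReal.one_ne_top hνU_le),
      hνuniv]
  -- the events
  set E : ℕ → Set (ℕ → U × ℝ) :=
    fun n => (⋂ i ∈ Finset.range n, (fun ω : ℕ → U × ℝ => ω i) ⁻¹' Cs)
      ∩ ((fun ω : ℕ → U × ℝ => ω n) ⁻¹' Ds) with hE
  -- inclusion of the disagreement event
  have hincl : {ω : ℕ → U × ℝ | holOut p ω ≠ holOut q ω} ⊆ ⋃ n, E n := by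
    intro ω hω
    simp only [Set.mem_setOf_eq] at hω
    by_cases hS : {i : ℕ | ω i ∈ Bp ∪ Bq}.Nonempty
    · set n := sInf {i : ℕ | ω i ∈ Bp ∪ Bq} with hn
      have hmemn : ω n ∈ Bp ∪ Bq := Nat.sInf_mem hS
      have hlt : ∀ i < n, ω i ∈ Cs := by
        intro i hi
        by_contra hc
        simp only [hCs, Set.mem_compl_iff, not_not] at hc
        exact absurd (Nat.sInf_le hc) (not_le.mpr hi)
      -- if both accepted at n, outputs agree
      have hnotboth : ω n ∉ Bp ∩ Bq := by
        intro hboth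
        have hip : sInf {i | (ω i).2 < p (ω i).1} = n := by
          apply le_antisymm (Nat.sInf_le hboth.1)
          by_contra hcon
          push_neg at hcon
          have hmem : sInf {i | (ω i).2 < p (ω i).1} ∈ {i | (ω i).2 < p (ω i).1} :=
            Nat.sInf_mem ⟨n, hboth.1⟩
          have := hlt _ hcon
          simp only [hCs, Set.mem_compl_iff, Set.mem_union] at this
          exact this (Or.inl hmem)
        have hiq : sInf {i | (ω i).2 < q (ω i).1} = n := by
          apply le_antisymm (Nat.sInf_le hboth.2)
          by_contra hcon
          push_neg at hcon
          have hmem : sInf {i | (ω i).2 < q (ω i).1} ∈ {i | (ω i).2 < q (ω i).1} :=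
            Nat.sInf_mem ⟨n, hboth.2⟩
          have := hlt _ hcon
          simp only [hCs, Set.mem_compl_iff, Set.mem_union] at this
          exact this (Or.inr hmem)
        exact hω (by rw [holOut, holOut, hip, hiq])
      have hmemD : ω n ∈ Ds := by
        rcases hmemn with h | h
        · exact Or.inl ⟨h, fun hc => hnotboth ⟨h, hc⟩⟩
        · exact Or.inr ⟨h, fun hc => hnotboth ⟨hc, h⟩⟩
      refine Set.mem_iUnion.2 ⟨n, ?_, hmemD⟩
      simp only [Set.mem_iInter, Finset.mem_range]
      exact fun i hi => hlt i hi
    · -- no index accepts at all: both outputs are (ω 0).1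
      exfalso
      rw [Set.not_nonempty_iff_eq_empty] at hS
      have hep : {i : ℕ | (ω i).2 < p (ω i).1} = ∅ := by
        rw [Set.eq_empty_iff_forall_notMem]
        intro i hi
        have : i ∈ {i : ℕ | ω i ∈ Bp ∪ Bq} := Or.inl hi
        rw [hS] at this
        exact this
      have heq : {i : ℕ | (ω i).2 < q (ω i).1} = ∅ := by
        rw [Set.eq_empty_iff_forall_notMem]
        intro i hi
        have : i ∈ {i : ℕ | ω i ∈ Bp ∪ Bq} := Or.inr hi
        rw [hS] at this
        exact this
      exact hω (by rw [holOut, holOut, hep, heq])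
  -- measure of each event via independence
  have hμcoord : ∀ (i : ℕ) (A : Set (U × ℝ)), MeasurableSet A →
      μ ((fun ω : ℕ → U × ℝ => ω i) ⁻¹' A) = ν A := by
    intro i A hA
    rw [← Measure.map_apply (measurable_pi_apply i) hA, hlaw i]
    rfl
  have hμE : ∀ n, μ (E n) = (ν Cs) ^ n * ν Ds := by
    intro n
    have hsets : ∀ i ∈ Finset.range (n + 1),
        MeasurableSet (if i = n then Ds else Cs) := by
      intro i _
      split <;> [exact hDm; exact hCm]
    have := hindep.measure_inter_preimage_eq_mul (Finset.range (n + 1))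
      (sets := fun i => if i = n then Ds else Cs) hsets
    have hEeq : E n = ⋂ i ∈ Finset.range (n + 1),
        (fun ω : ℕ → U × ℝ => ω i) ⁻¹' (if i = n then Ds else Cs) := by
      show ((⋂ i ∈ Finset.range n, (fun ω : ℕ → U × ℝ => ω i) ⁻¹' Cs)
        ∩ ((fun ω : ℕ → U × ℝ => ω n) ⁻¹' Ds)) = _
      rw [Finset.range_add_one, Finset.set_biInter_insert]
      rw [if_pos rfl, Set.inter_comm]
      congr 1
      apply Set.iInter₂_congr
      intro i hi
      rw [if_neg (Finset.mem_range.mp hi).ne]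
    rw [hEeq, this, Finset.prod_range_succ]
    simp only []
    rw [if_pos trivial, hμcoord n Ds hDm]
    have hrest : ∀ i ∈ Finset.range n,
        μ ((fun ω : ℕ → U × ℝ => ω i) ⁻¹' (fun j => if j = n then Ds else Cs) i) = ν Cs := by
      intro i hi
      simp only []
      rw [if_neg (Finset.mem_range.mp hi).ne, hμcoord i Cs hCm]
    rw [Finset.prod_congr rfl hrest, Finset.prod_const, Finset.card_range]
  -- put it together
  calc μ {ω | holOut p ω ≠ holOut q ω} ≤ μ (⋃ n, E n) := measure_mono hincl
    _ ≤ ∑' n, μ (E n) := measure_iUnion_le _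
    _ = ∑' n, (ν Cs) ^ n * ν Ds := by simp_rw [hμE]
    _ = (∑' n, (ν Cs) ^ n) * ν Ds := ENNReal.tsum_mul_right
    _ = (1 - ν Cs)⁻¹ * ν Ds := by rw [ENNReal.tsum_geometric]
    _ = (ν (Bp ∪ Bq))⁻¹ * ν Ds := by
        rw [hνC, ENNReal.sub_sub_cancel ENNReal.one_ne_top hνU_le]
    _ ≤ ENNReal.ofReal (2 * δ / (1 + δ)) := by
        apply le_of_eq
        rw [hνU, hνD]
        have hcne : (Fintype.card U : ENNReal) ≠ 0 := Nat.cast_ne_zero.mpr hcard.ne'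
        have hcnt : (Fintype.card U : ENNReal) ≠ ⊤ := ENNReal.natCast_ne_top _
        rw [ENNReal.mul_inv (Or.inl (by simpa using hcne)) (Or.inl (by simpa using hcnt))]
        rw [inv_inv]
        calc (Fintype.card U : ENNReal) * (ENNReal.ofReal (1 + δ))⁻¹ *
              ((Fintype.card U : ENNReal)⁻¹ * ENNReal.ofReal (2 * δ))
            = ((Fintype.card U : ENNReal) * (Fintype.card U : ENNReal)⁻¹) *
              ((ENNReal.ofReal (1 + δ))⁻¹ * ENNReal.ofReal (2 * δ)) := by ring
          _ = (ENNReal.ofReal (1 + δ))⁻¹ * ENNReal.ofReal (2 * δ) := by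
              rw [ENNReal.mul_inv_cancel hcne hcnt, one_mul]
          _ = ENNReal.ofReal (2 * δ) / ENNReal.ofReal (1 + δ) := by
              rw [div_eq_mul_inv, mul_comm]
          _ = ENNReal.ofReal (2 * δ / (1 + δ)) := by
              rw [ENNReal.ofReal_div_of_pos h1δ]
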